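/- For the generalized quaternion group Q_ℓ with ℓ = 2^j ≥ 16, the class function Θ₁ (equal to ℓ/4 at ±I, equal to −2 at elements ξ^{2i}J, and 0 elsewhere) equals the virtual character κ₂ + κ₃ + Σ_{1 ≤ i < ℓ/8} (−1)^i γ_{2i}; in particular Θ₁ is the character of a virtual representation of virtual dimension 0. -/

import Mathlib

open Complex Matrix

/-- primitive (2n)-th root of unity ζ = e^{2πi/(2n)} = e^{4πi/ℓ} for ℓ = 4n. -/
noncomputable def zeta (n : ℕ) : ℂ := Complex.exp (2 * Real.pi * Complex.I / (2 * n))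

/-- The 2-dimensional representation γ_u of the generalized quaternion group,
with γ_u(ξ) = diag(ζ^u, ζ^{-u}) and γ_u(J) = [[0,(-1)^u],[1,0]];
here `a i` = ξ^i and `xa i` = J ξ^i. -/
noncomputable def gam (n : ℕ) (u : ℤ) : QuaternionGroup n → Matrix (Fin 2) (Fin 2) ℂ
  | .a i => !![zeta n ^ (u * (i.val : ℤ)), 0; 0, zeta n ^ (-(u * (i.val : ℤ)))]
  | .xa i => !![0, (-1 : ℂ) ^ u * zeta n ^ (-(u * (i.val : ℤ))); zeta n ^ (u * (i.val : ℤ)), 0]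

/-- character of γ_u -/
noncomputable def chi (n : ℕ) (u : ℤ) (g : QuaternionGroup n) : ℂ := Matrix.trace (gam n u g)

/-- κ₁ : ξ ↦ -1, J ↦ 1 -/
def kappa1 (n : ℕ) : QuaternionGroup n → ℂ
  | .a i => (-1) ^ i.val
  | .xa i => (-1) ^ i.val

/-- κ₂ : ξ ↦ 1, J ↦ -1 -/
def kappa2 (n : ℕ) : QuaternionGroup n → ℂ
  | .a _ => 1
  | .xa _ => -1

/-- κ₃ : ξ ↦ -1, J ↦ -1 -/
def kappa3 (n : ℕ) : QuaternionGroup n → ℂ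
  | .a i => (-1) ^ i.val
  | .xa i => -(-1) ^ i.val

/-- Θ₁ : value ℓ/4 = n at ±I = ξ^{±n/2}, value -2 at ξ^{2i}J, 0 otherwise. -/
def Theta1 (n : ℕ) : QuaternionGroup n → ℂ
  | .a i => if i = ((n / 2 : ℕ) : ZMod (2 * n)) ∨ i = -((n / 2 : ℕ) : ZMod (2 * n)) then (n : ℂ) else 0
  | .xa i => if Even i.val then -2 else 0

/-- Θ₂ : value ℓ/4 = n at ±I, value -2 at ξ^{2i+1}J, 0 otherwise. -/
def Theta2 (n : ℕ) : QuaternionGroup n → ℂ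
  | .a i => if i = ((n / 2 : ℕ) : ZMod (2 * n)) ∨ i = -((n / 2 : ℕ) : ZMod (2 * n)) then (n : ℂ) else 0
  | .xa i => if Even i.val then 0 else -2

/-- Δ(g) = det(I₂ - γ₁(g)) -/
noncomputable def Del (n : ℕ) (g : QuaternionGroup n) : ℂ := Matrix.det (1 - gam n 1 g)

lemma zeta_pow_two_n (n : ℕ) (hn : 0 < n) : zeta n ^ (2 * n) = 1 := by
  have hne : (n:ℂ) ≠ 0 := Nat.cast_ne_zero.2 hn.ne'
  rw [zeta, ← Complex.exp_nat_mul]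
  rw [show ((2*n : ℕ) : ℂ) * (2 * Real.pi * Complex.I / (2 * n)) = 2 * Real.pi * Complex.I by
    push_cast; field_simp]
  exact Complex.exp_two_pi_mul_I

lemma zeta_pow_n (n : ℕ) (hn : 0 < n) : zeta n ^ n = -1 := by
  have hne : (n:ℂ) ≠ 0 := Nat.cast_ne_zero.2 hn.ne'
  rw [zeta, ← Complex.exp_nat_mul]
  rw [show (n : ℂ) * (2 * Real.pi * Complex.I / (2 * n)) = Real.pi * Complex.I by
    field_simp]
  exact Complex.exp_pi_mul_I

lemma zeta_prim (n : ℕ) (hn : 0 < n) : IsPrimitiveRoot (zeta n) (2 * n) := by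
  have := Complex.isPrimitiveRoot_exp (2*n) (by omega)
  rw [show ((2*n : ℕ) : ℂ) = 2 * (n:ℂ) by push_cast; ring] at this
  exact this

lemma zeta_ne_zero (n : ℕ) : zeta n ≠ 0 := Complex.exp_ne_zero _

lemma zpow_congr (ζ : ℂ) (N : ℕ) (hζ0 : ζ ≠ 0) (hζ : ζ ^ N = 1) (a b s : ℤ) (h : a = b + N * s) :
    ζ ^ a = ζ ^ b := by
  subst h
  rw [zpow_add₀ hζ0, _root_.zpow_mul, zpow_natCast, hζ, _root_.one_zpow, mul_one]

lemma geom_root (n : ℕ) (t : ℂ) (ht : t ^ n = 1) :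
    ∑ k ∈ Finset.range n, t ^ k = if t = 1 then (n : ℂ) else 0 := by
  split_ifs with h
  · simp [h]
  · rw [geom_sum_eq h, ht, sub_self, zero_div]

lemma zmod_eq_iff_val (N : ℕ) [NeZero N] (a b : ZMod N) : a = b ↔ a.val = b.val := by
  constructor
  · rintro rfl; rfl
  · intro h; rw [← ZMod.natCast_zmod_val a, ← ZMod.natCast_zmod_val b, h]

/-- For ℓ = 2^j ≥ 16, Θ₁ = κ₂ + κ₃ + Σ_{1 ≤ i < ℓ/8} (-1)^i γ_{2i} as class functions
(in particular Θ₁ is a virtual character of virtual dimension Θ₁(1) = 0). -/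
theorem stmt6 (j n : ℕ) (hj : 4 ≤ j) (hn : 4 * n = 2 ^ j) (g : QuaternionGroup n) :
    Theta1 n g = kappa2 n g + kappa3 n g +
      ∑ i ∈ Finset.Ico 1 (n / 2), (-1 : ℂ) ^ i * chi n (2 * i) g := by
  obtain ⟨p, hp, hnp⟩ : ∃ p, 0 < p ∧ n = 4 * p := by
    refine ⟨2 ^ (j - 4), (by positivity), ?_⟩
    have h16 : 2 ^ j = 16 * 2 ^ (j - 4) := by
      rw [show (16:ℕ) = 2 ^ 4 from rfl, ← pow_add]
      congr 1; omega
    omega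
  have hn0 : 0 < n := by omega
  haveI : NeZero (2 * n) := ⟨by omega⟩
  have hζ0 := zeta_ne_zero n
  have hζ2n := zeta_pow_two_n n hn0
  have hζn := zeta_pow_n n hn0
  cases g with
  | xa i =>
    simp only [Theta1, kappa2, kappa3, chi, gam, Matrix.trace_fin_two_of, add_zero, zero_add,
      mul_zero, Finset.sum_const_zero]
    rcases Nat.even_or_odd i.val with h | h
    · rw [if_pos h, Even.neg_one_pow h]; ring
    · rw [if_neg (Nat.not_even_iff_odd.mpr h), Odd.neg_one_pow h]; ring
  | a i =>
    set c := i.val with hc_def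
    have hc : c < 2 * n := i.val_lt
    set t : ℂ := zeta n ^ (2 * c + n) with ht_def
    have htn : t ^ n = 1 := by
      rw [ht_def, ← pow_mul, show (2*c+n)*n = (2*n)*(c+2*p) by rw [hnp]; ring, pow_mul, hζ2n,
        one_pow]
    have htm : t ^ (2 * p) = (-1 : ℂ) ^ c := by
      rw [ht_def, ← pow_mul, show (2*c+n)*(2*p) = n*(c+2*p) by rw [hnp]; ring, pow_mul, hζn,
        pow_add, pow_mul, neg_one_sq, one_pow, mul_one]
    have hhalf : n / 2 = 2 * p := by omega
    -- the sum equals ∑_{k ∈ Ico 1 (2p)} (t^k + t^(n-k))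
    have hsum1 : ∑ k ∈ Finset.Ico 1 (n / 2), (-1 : ℂ) ^ k * chi n (2 * k) (QuaternionGroup.a i)
        = ∑ k ∈ Finset.Ico 1 (2*p), (t ^ k + t ^ (n - k)) := by
      rw [hhalf]
      refine Finset.sum_congr rfl fun k hk => ?_
      rw [Finset.mem_Ico] at hk
      have hkn : k ≤ n := by omega
      simp only [chi, gam, Matrix.trace_fin_two_of]
      have h1 : (-1 : ℂ) ^ k * zeta n ^ ((2 * (k:ℤ)) * (c:ℤ))
          = t ^ k := by
        rw [← hζn, ← pow_mul, ht_def, ← pow_mul, ← zpow_natCast (zeta n) (n*k),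
          ← zpow_natCast (zeta n) ((2*c+n)*k), ← zpow_add₀ hζ0]
        congr 1
        push_cast; ring
      have h2 : (-1 : ℂ) ^ k * zeta n ^ (-((2 * (k:ℤ)) * (c:ℤ)))
          = t ^ (n - k) := by
        rw [← hζn, ← pow_mul, ht_def, ← pow_mul, ← zpow_natCast (zeta n) (n*k),
          ← zpow_natCast (zeta n) ((2*c+n)*(n-k)), ← zpow_add₀ hζ0]
        apply zpow_congr (zeta n) (2*n) hζ0 hζ2n _ _ ((k:ℤ) - c - 2*p)
        push_cast [Nat.cast_sub hkn]
        rw [hnp]; push_cast; ring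
      rw [mul_add, h1, h2]
    -- reindex the second part
    have hsum2 : ∑ k ∈ Finset.Ico 1 (2*p), t ^ (n - k)
        = ∑ k ∈ Finset.Ico (2*p+1) n, t ^ k := by
      refine Finset.sum_nbij' (fun k => n - k) (fun k => n - k) ?_ ?_ ?_ ?_ ?_
      · intro k hk; simp only [Finset.mem_Ico] at hk ⊢; omega
      · intro k hk; simp only [Finset.mem_Ico] at hk ⊢; omega
      · intro k hk; simp only [Finset.mem_Ico] at hk; omega
      · intro k hk; simp only [Finset.mem_Ico] at hk; omega
      · intro k hk; rfl
    -- decompose the full geometric sum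
    have hsum3 : ∑ k ∈ Finset.range n, t ^ k
        = 1 + (∑ k ∈ Finset.Ico 1 (2*p), t ^ k) + (-1:ℂ)^c
          + ∑ k ∈ Finset.Ico (2*p+1) n, t ^ k := by
      rw [Finset.range_eq_Ico,
        ← Finset.sum_Ico_consecutive _ (by omega : 0 ≤ 1) (by omega : 1 ≤ n),
        ← Finset.sum_Ico_consecutive _ (by omega : 1 ≤ 2*p) (by omega : 2*p ≤ n),
        Finset.sum_eq_sum_Ico_succ_bot (by omega : 2*p < n), htm]
      simp [Finset.sum_Ico_eq_sum_range]
      ring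
    -- the condition is equivalent to t = 1
    have hcond : (i = ((n / 2 : ℕ) : ZMod (2 * n)) ∨ i = -((n / 2 : ℕ) : ZMod (2 * n)))
        ↔ t = 1 := by
      rw [ht_def, (zeta_prim n hn0).pow_eq_one_iff_dvd]
      have hneg : -(((n / 2 : ℕ) : ZMod (2 * n))) = ((6 * p : ℕ) : ZMod (2 * n)) := by
        rw [hhalf]
        refine neg_eq_of_add_eq_zero_left ?_
        rw [← Nat.cast_add, show 6*p + 2*p = 2*n by omega, ZMod.natCast_self]
      rw [hneg, zmod_eq_iff_val, zmod_eq_iff_val,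
        ZMod.val_cast_of_lt (show n / 2 < 2*n by omega),
        ZMod.val_cast_of_lt (show 6*p < 2*n by omega), hhalf]
      constructor
      · rintro (h | h) <;> rw [← hc_def] at h
        · exact ⟨1, by omega⟩
        · exact ⟨2, by omega⟩
      · rintro ⟨k, hk⟩
        rw [← hc_def]
        have hc8 : c < 8 * p := by omega
        have hk' : 2 * c + 4 * p = 8 * p * k := by rw [hnp] at hk; linarith
        have hk3 : k < 3 := by nlinarith
        interval_cases k <;> omega
    simp only [Theta1, kappa2, kappa3, hsum1, Finset.sum_add_distrib, hsum2]
    rw [if_congr hcond rfl rfl, ← geom_root n t htn, hsum3, ← hc_def]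
    ring
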